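/- Let f : ℝ² → ℝ be integrable with support in the unit disc and let g(x) = f_ψ(x + x') for a fixed rotation angle ψ and translation x' ∈ ℝ². Then the rotationally-averaged third-order autocorrelation is invariant: s_g = s_f, where s_f(x₁,x₂) = (1/2π) ∫₀^{2π} ∫_{ℝ²} f_φ(x) f_φ(x+x₁) f_φ(x+x₂) dx dφ. -/

import Mathlib

open MeasureTheory

/-- Rotation of the plane (identified with `ℂ`) by angle `φ`, applied to the
argument of `f`: `f_φ(x) = f(R_φ x)`. -/
noncomputable def rotFun (f : ℂ → ℝ) (φ : ℝ) (x : ℂ) : ℝ :=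
  f (Complex.exp (φ * Complex.I) * x)

/-- The rotationally averaged third-order autocorrelation `s_f`. -/
noncomputable def sAuto (f : ℂ → ℝ) (x₁ x₂ : ℂ) : ℝ :=
  (1 / (2 * Real.pi)) * ∫ φ in (0 : ℝ)..(2 * Real.pi),
    ∫ x : ℂ, rotFun f φ x * rotFun f φ (x + x₁) * rotFun f φ (x + x₂)

theorem stmt16 (f : ℂ → ℝ) (hmeas : Measurable f)
    (hbdd : ∃ C : ℝ, ∀ x, |f x| ≤ C)
    (hsupp : ∀ x : ℂ, 1 ≤ ‖x‖ → f x = 0)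
    (ψ : ℝ) (x' : ℂ) (g : ℂ → ℝ)
    (hg : ∀ x : ℂ, g x = f (Complex.exp (ψ * Complex.I) * (x + x')))
    (x₁ x₂ : ℂ) :
    sAuto g x₁ x₂ = sAuto f x₁ x₂ := by
  unfold sAuto
  congr 1
  have key : ∀ φ : ℝ,
      (∫ x : ℂ, rotFun g φ x * rotFun g φ (x + x₁) * rotFun g φ (x + x₂))
      = ∫ x : ℂ, rotFun f (φ + ψ) x * rotFun f (φ + ψ) (x + x₁) * rotFun f (φ + ψ) (x + x₂) := by
    intro φ
    have hc : ∀ y : ℂ, rotFun g φ y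
        = rotFun f (φ + ψ) (y + Complex.exp (-(φ : ℂ) * Complex.I) * x') := by
      intro y
      simp only [rotFun, hg]
      congr 1
      rw [Complex.ofReal_add, add_mul, Complex.exp_add, neg_mul, Complex.exp_neg]
      field_simp
    generalize Complex.exp (-(φ : ℂ) * Complex.I) * x' = c at hc
    simp_rw [hc, add_right_comm _ _ c]
    exact integral_add_right_eq_self
      (fun x => rotFun f (φ + ψ) x * rotFun f (φ + ψ) (x + x₁) * rotFun f (φ + ψ) (x + x₂)) c
  simp_rw [key]
  have hper : Function.Periodic
      (fun φ => ∫ x : ℂ, rotFun f φ x * rotFun f φ (x + x₁) * rotFun f φ (x + x₂))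
      (2 * Real.pi) := by
    intro φ
    have hrot : ∀ y : ℂ, rotFun f (φ + 2 * Real.pi) y = rotFun f φ y := by
      intro y
      simp only [rotFun]
      congr 2
      rw [Complex.ofReal_add, add_mul, Complex.exp_add,
        show ((2 * Real.pi : ℝ) : ℂ) * Complex.I = 2 * (Real.pi : ℂ) * Complex.I by
          push_cast; ring,
        Complex.exp_two_pi_mul_I, mul_one]
    simp only []
    simp_rw [hrot]
  rw [intervalIntegral.integral_comp_add_right
    (fun φ => ∫ x : ℂ, rotFun f φ x * rotFun f φ (x + x₁) * rotFun f φ (x + x₂)) ψ]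
  have := hper.intervalIntegral_add_eq ψ 0
  simpa [zero_add, add_comm] using this
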